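/- arXiv:1507.04462 — 2 statements merged into one kernel-verified Lean document; each statement's English description precedes it below -/
import Mathlib

section
/- In a state satisfying the credit-conservation invariant with total credit C, if the chief executive node's hold credit plus the sum of credits recorded for affected nodes equals C, then the sum of credits held by all non-affected nodes other than the chief executive, plus all in-transit message credits, equals 0; consequently (since credits are nonnegative) every non-affected node other than C_E holds zero credit and there are no in-transit messages carrying positive credit. -/
/-- Weak-termination condition (Equation 1): if the chief executive's credit
plus the recorded affected-node credits equals the total `C`, then all other
non-affected nodes hold zero and no in-transit message carries positive
credit. -/
theorem stmt3 {ι μ : Type*} [Fintype ι] [Fintype μ] [DecidableEq ι]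
    (C : ℚ) (credit : ι → ℚ) (msg : μ → ℚ)
    (cE : ι) (affected : Finset ι) (hcE : cE ∉ affected)
    (hcred : ∀ i, 0 ≤ credit i) (hmsg : ∀ m, 0 ≤ msg m)
    (recorded : ℚ) (hrec : recorded = ∑ i ∈ affected, credit i)
    (hconv : ∑ i, credit i + ∑ m, msg m = C)
    (hweak : credit cE + recorded = C) :
    ((∑ i ∈ Finset.univ \ insert cE affected, credit i) + ∑ m, msg m = 0) ∧
    (∀ i, i ∉ affected → i ≠ cE → credit i = 0) ∧
    (∀ m, ¬ 0 < msg m) := by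
  have hsplit : ∑ i, credit i =
      ∑ i ∈ insert cE affected, credit i +
      ∑ i ∈ Finset.univ \ insert cE affected, credit i := by
    rw [add_comm, Finset.sum_sdiff (Finset.subset_univ _)]
  have hins : ∑ i ∈ insert cE affected, credit i = credit cE + recorded := by
    rw [Finset.sum_insert hcE, hrec]
  have hzero : (∑ i ∈ Finset.univ \ insert cE affected, credit i) + ∑ m, msg m = 0 := by
    have := hconv
    rw [hsplit, hins, ← hweak] at this
    linarith
  have hrest : 0 ≤ ∑ i ∈ Finset.univ \ insert cE affected, credit i :=
    Finset.sum_nonneg fun i _ => hcred i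
  have hm : 0 ≤ ∑ m, msg m := Finset.sum_nonneg fun m _ => hmsg m
  have hrest0 : ∑ i ∈ Finset.univ \ insert cE affected, credit i = 0 := by linarith
  have hm0 : ∑ m, msg m = 0 := by linarith
  refine ⟨hzero, fun i hi hne => ?_, fun m => ?_⟩
  · have := (Finset.sum_eq_zero_iff_of_nonneg fun j _ => hcred j).mp hrest0 i
    apply this
    simp [hi, hne]
  · have := (Finset.sum_eq_zero_iff_of_nonneg fun j _ => hmsg j).mp hm0 m (Finset.mem_univ m)
    simp [this]
end

section
/- In a dynamic tree where each non-root node, upon becoming passive, reassigns all of its active children to a designated new parent (either its own parent or one chosen active child), the parent pointers always form a forest with no cycles among active nodes, and following parent pointers from any active node reaches the current chief executive node in finitely many steps. -/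
/-- `v` reaches `r` by following parent pointers finitely many times. -/
def Reaches {ι : Type*} (parent : ι → ι) (r v : ι) : Prop :=
  ∃ k : ℕ, parent^[k] v = r

/-- When a node `d` becomes passive, its children are redirected to a new
parent `w`: either `d ≠ r` and `w = parent d` (root unchanged), or `d = r`
hands over to a chosen child `w`, which becomes the new chief executive `r'`.
The parent pointers remain acyclic on the remaining nodes and every remaining
node still reaches the current chief executive in finitely many steps. -/
theorem stmt13 {ι : Type*} [DecidableEq ι]
    (parent : ι → ι) (r : ι) (hr : parent r = r)
    (hall : ∀ v, Reaches parent r v)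
    (d w r' : ι)
    (hcase : (d ≠ r ∧ w = parent d ∧ r' = r) ∨
             (d = r ∧ parent w = d ∧ w ≠ d ∧ r' = w))
    (parent' : ι → ι)
    (hparent' : ∀ c, parent' c =
      if c = r' then r' else if parent c = d then w else parent c) :
    (∀ v, v ≠ d → Reaches parent' r' v) ∧
    (∀ v, v ≠ r' → v ≠ d → ∀ k, 0 < k → parent'^[k] v ≠ v) := by
  classical
  have hallx : ∀ v, ∃ k, parent^[k] v = r := hall
  set m : ι → ℕ := fun v => Nat.find (hallx v) with hm
  have hmspec : ∀ v, parent^[m v] v = r := fun v => Nat.find_spec (hallx v)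
  have hmlt : ∀ v, v ≠ r → m (parent v) < m v := by
    intro v hv
    have h0 : m v ≠ 0 := by
      intro h
      apply hv
      have := hmspec v
      rw [h] at this
      simpa using this
    obtain ⟨n, hn⟩ := Nat.exists_eq_succ_of_ne_zero h0
    have hn' : parent^[n] (parent v) = r := by
      have := hmspec v
      rw [hn, Function.iterate_succ_apply] at this
      exact this
    have : m (parent v) ≤ n := Nat.find_le hn'
    omega
  have hr'fix : parent' r' = r' := by rw [hparent' r', if_pos rfl]
  have step : ∀ v, v ≠ r' → v ≠ d →
      parent' v ≠ d ∧ (parent' v = r' ∨ m (parent' v) < m v) := by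
    intro v hvr hvd
    rw [hparent' v, if_neg hvr]
    rcases hcase with ⟨hdr, hw, hrr⟩ | ⟨hdr, hpw, hwd, hrw⟩
    · by_cases hp : parent v = d
      · rw [if_pos hp]
        have hdd : m (parent d) < m d := hmlt d hdr
        have hpd : parent d ≠ d := by
          intro h; rw [h] at hdd; omega
        refine ⟨hw ▸ hpd, Or.inr ?_⟩
        have h1 : m (parent v) < m v := hmlt v (hrr ▸ hvr)
        rw [hp] at h1
        rw [hw]
        omega
      · rw [if_neg hp]
        exact ⟨hp, Or.inr (hmlt v (hrr ▸ hvr))⟩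
    · by_cases hp : parent v = d
      · rw [if_pos hp]
        exact ⟨hwd, Or.inl hrw.symm⟩
      · rw [if_neg hp]
        exact ⟨hp, Or.inr (hmlt v (hdr ▸ hvd))⟩
  constructor
  · intro v hvd
    have key : ∀ n v, m v ≤ n → v ≠ d → Reaches parent' r' v := by
      intro n
      induction n with
      | zero =>
        intro v hmv hvd
        by_cases hvr : v = r'
        · exact ⟨0, hvr⟩
        · obtain ⟨h1, h2⟩ := step v hvr hvd
          rcases h2 with h2 | h2
          · exact ⟨1, h2⟩
          · omega
      | succ n ih =>
        intro v hmv hvd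
        by_cases hvr : v = r'
        · exact ⟨0, hvr⟩
        · obtain ⟨h1, h2⟩ := step v hvr hvd
          rcases h2 with h2 | h2
          · exact ⟨1, h2⟩
          · obtain ⟨k, hk⟩ := ih (parent' v) (by omega) h1
            exact ⟨k + 1, by rw [Function.iterate_succ_apply]; exact hk⟩
    exact key (m v) v le_rfl hvd
  · intro v hvr hvd k hk hcyc
    have hfix : ∀ t, parent'^[t] r' = r' := fun t => Function.iterate_fixed hr'fix t
    have hcycmul : ∀ n, parent'^[k * n] v = v := by
      intro n
      rw [Function.iterate_mul]
      exact Function.iterate_fixed hcyc n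
    have hner : ∀ j, parent'^[j] v ≠ r' := by
      intro j hj
      have hge : j + 1 ≤ k * (j + 1) := Nat.le_mul_of_pos_left _ hk
      have h1 : parent'^[k * (j + 1)] v = r' := by
        have h2 : k * (j + 1) = (k * (j + 1) - j) + j := by omega
        rw [h2, Function.iterate_add_apply, hj, hfix]
      rw [hcycmul (j + 1)] at h1
      exact hvr h1
    have hned : ∀ j, parent'^[j] v ≠ d := by
      intro j
      induction j with
      | zero => exact hvd
      | succ j ih =>
        rw [Function.iterate_succ_apply']
        exact (step _ (hner j) ih).1
    have hdec : ∀ j, m (parent'^[j] v) + j ≤ m v := by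
      intro j
      induction j with
      | zero => simp
      | succ j ih =>
        rcases (step _ (hner j) (hned j)).2 with h | h
        · exact absurd (by rw [Function.iterate_succ_apply']; exact h) (hner (j + 1))
        · rw [Function.iterate_succ_apply']
          omega
    have := hdec k
    rw [hcyc] at this
    omega
end
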